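/- For all i ≥ 1, the total number of occurrences of square factors in W_i (that is, the number of pairs (j, q) with q ≥ 1 and 1 ≤ j ≤ |W_i| - 2q + 1 such that W_i[j..j+2q-1] is a square of the form uu with |u| = q) equals f_i - 1. -/

import Mathlib

/-- The morphism `phi` on the alphabet `ℕ`: `phi (2i) = (2i)(2i+1)` and `phi (2i+1) = (2i+2)`. -/
def phi (a : ℕ) : List ℕ := if a % 2 = 0 then [a, a + 1] else [a + 1]

/-- The finite ZWW words: `W n = phi^n(0)`, so `W 0 = 0`, `W 1 = 01`, `W 2 = 012`, `W 3 = 01223`. -/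
def W (n : ℕ) : List ℕ := (fun w => w.flatMap phi)^[n] [0]

/-- The total number of occurrences of square factors in a word `w`: the number of
pairs `(j, q)` with `q ≥ 1` and `j + 2q ≤ |w|` (0-indexed `j`) such that the factor
of `w` of length `2q` starting at position `j` is a square `u ++ u` with `|u| = q`. -/
def sqOcc (w : List ℕ) : ℕ :=
  ((Finset.range (w.length + 1) ×ˢ Finset.range (w.length + 1)).filter
    (fun jq => 1 ≤ jq.2 ∧ jq.1 + 2 * jq.2 ≤ w.length ∧
      (w.drop jq.1).take (2 * jq.2) = (w.drop jq.1).take jq.2 ++ (w.drop jq.1).take jq.2)).card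

open Nat



/-- arithmetic description of the infinite ZWW word -/
def zw : ℕ → ℕ
  | x =>
    if h : x < 2 then x
    else
      have hpos : 0 < Nat.fib (Nat.greatestFib x) := by
        have : Nat.fib 3 ≤ x := by simpa [Nat.fib] using (by omega : 2 ≤ x)
        have h3 : 3 ≤ Nat.greatestFib x := Nat.le_greatestFib.2 this
        exact Nat.fib_pos.2 (by omega)
      have : x - Nat.fib (Nat.greatestFib x) < x := Nat.sub_lt (by omega) hpos
      2 + zw (x - Nat.fib (Nat.greatestFib x))

lemma zw_zero : zw 0 = 0 := by simp [zw]
lemma zw_one : zw 1 = 1 := by simp [zw]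

lemma zw_strip {k x : ℕ} (hk : 3 ≤ k) (h1 : Nat.fib k ≤ x) (h2 : x < Nat.fib (k+1)) :
    zw x = 2 + zw (x - Nat.fib k) := by
  have hx2 : 2 ≤ x := le_trans (by simpa [Nat.fib] using Nat.fib_mono hk) h1
  have hk1 : k ≤ Nat.greatestFib x := Nat.le_greatestFib.2 h1
  have hk2 : Nat.greatestFib x < k + 1 := Nat.greatestFib_lt.2 h2
  have hkk : Nat.greatestFib x = k := by omega
  rw [zw, dif_neg (by omega : ¬ x < 2)]; simp only []; rw [hkk]

lemma zw_ge_two {x : ℕ} (hx : 2 ≤ x) : 2 ≤ zw x := by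
  rw [zw, dif_neg (by omega : ¬ x < 2)]; simp only []; omega

lemma zw_eq_zero {x : ℕ} (h : zw x = 0) : x = 0 := by
  by_contra hx
  rcases Nat.lt_or_ge x 2 with h2 | h2
  · interval_cases x <;> simp_all [zw_zero, zw_one]
  · have := zw_ge_two h2; omega

lemma exists_fib_interval {x : ℕ} (hx : 2 ≤ x) :
    ∃ k, 3 ≤ k ∧ Nat.fib k ≤ x ∧ x < Nat.fib (k+1) := by
  refine ⟨Nat.greatestFib x, ?_, Nat.fib_greatestFib_le x, Nat.lt_fib_greatestFib_add_one x⟩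
  exact Nat.le_greatestFib.2 (by simpa [Nat.fib] using hx)

lemma zw_fib {k : ℕ} (hk : 3 ≤ k) : zw (Nat.fib k) = 2 := by
  have h2 : Nat.fib k < Nat.fib (k+1) := Nat.fib_lt_fib_succ (by omega)
  rw [zw_strip hk le_rfl h2]; simp [zw_zero]

lemma zw_eq_two {x : ℕ} (h : zw x = 2) : ∃ k, 3 ≤ k ∧ x = Nat.fib k := by
  rcases Nat.lt_or_ge x 2 with h2 | h2
  · interval_cases x <;> simp_all [zw_zero, zw_one]
  · obtain ⟨k, hk, h1, hlt⟩ := exists_fib_interval h2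
    rw [zw_strip hk h1 hlt] at h
    have := zw_eq_zero (by omega : zw (x - Nat.fib k) = 0)
    exact ⟨k, hk, by omega⟩

lemma fib_lt_fib' {a b : ℕ} (ha : 2 ≤ a) (h : a < b) : Nat.fib a < Nat.fib b :=
  (Nat.fib_lt_fib ha).2 h

/-- no Fibonacci number lies strictly between `fib a` and `fib (a+1)` -/
lemma no_fib_between {a s : ℕ} (ha : 2 ≤ a) (h1 : Nat.fib a < Nat.fib s)
    (h2 : Nat.fib s < Nat.fib (a+1)) : False := by
  have hs : a < s := by
    by_contra h; exact absurd (Nat.fib_mono (by omega : s ≤ a)) (by omega)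
  have : Nat.fib (a+1) ≤ Nat.fib s := Nat.fib_mono (by omega)
  omega


lemma violation : ∀ k, 2 ≤ k → ∀ c, c < Nat.fib (k+1) →
    ∃ y, c ≤ y ∧ y < Nat.fib (k+1) ∧ zw y ≠ zw (y + Nat.fib k) := by
  intro k
  induction k using Nat.strong_induction_on with
  | _ k ih =>
    intro hk c hc
    have f2 : Nat.fib 2 = 1 := by decide
    have f3 : Nat.fib 3 = 2 := by decide
    have f4 : Nat.fib 4 = 3 := by decide
    have f5 : Nat.fib 5 = 5 := by decide
    have z2 : zw 2 = 2 := by rw [← f3]; exact zw_fib (by omega)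
    have z3 : zw 3 = 2 := by rw [← f4]; exact zw_fib (by omega)
    match k, hk with
    | 2, _ =>
      refine ⟨c, le_rfl, hc, ?_⟩
      rw [f3] at hc
      interval_cases c <;> simp [zw_zero, zw_one, f2, z2, z3]
    | 3, _ =>
      refine ⟨c, le_rfl, hc, ?_⟩
      rw [f4] at hc
      have z4 : zw 4 = 3 := by
        rw [zw_strip (k := 4) (by omega) (by rw [f4]; omega) (by rw [f5]; omega)]
        norm_num [zw_one]
      interval_cases c <;> simp [zw_zero, zw_one, f3, z2, z3, z4]
    | (t+4), _ =>
      have e3 : Nat.fib (t+3) = Nat.fib (t+1) + Nat.fib (t+2) := Nat.fib_add_two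
      have e4 : Nat.fib (t+4) = Nat.fib (t+2) + Nat.fib (t+3) := Nat.fib_add_two
      have e5 : Nat.fib (t+5) = Nat.fib (t+3) + Nat.fib (t+4) := Nat.fib_add_two
      have e6 : Nat.fib (t+6) = Nat.fib (t+4) + Nat.fib (t+5) := Nat.fib_add_two
      have n1 : Nat.fib (t+4+1) = Nat.fib (t+5) := rfl
      have n2 : Nat.fib (t+5+1) = Nat.fib (t+6) := rfl
      have n3 : Nat.fib (t+2+1) = Nat.fib (t+3) := rfl
      have p2 : 1 ≤ Nat.fib (t+2) := Nat.fib_pos.2 (by omega)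
      have p3 : 1 ≤ Nat.fib (t+3) := Nat.fib_pos.2 (by omega)
      rcases Nat.lt_or_ge c (Nat.fib (t+3)) with hc1 | hc1
      · refine ⟨c, le_rfl, by omega, ?_⟩
        have : zw (c + Nat.fib (t+4)) = 2 + zw c := by
          rw [zw_strip (k := t+4) (by omega) (by omega) (by omega)]
          congr 2; omega
        omega
      rcases le_or_gt c (Nat.fib (t+4)) with hc2 | hc2
      · refine ⟨Nat.fib (t+4), hc2, by omega, ?_⟩
        have h1 : zw (Nat.fib (t+4)) = 2 := zw_fib (by omega)
        have h2 : zw (Nat.fib (t+4) + Nat.fib (t+4)) = 2 + zw (Nat.fib (t+2)) := by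
          rw [zw_strip (k := t+5) (by omega) (by omega) (by omega)]
          congr 2; omega
        have h3 : zw (Nat.fib (t+2)) ≠ 0 := fun h => by
          have := zw_eq_zero h; omega
        omega
      · obtain ⟨z, hz1, hz2, hz3⟩ := ih (t+2) (by omega) (by omega) (c - Nat.fib (t+4)) (by omega)
        rw [n3] at hz2
        refine ⟨z + Nat.fib (t+4), by omega, by omega, ?_⟩
        have h1 : zw (z + Nat.fib (t+4)) = 2 + zw z := by
          rw [zw_strip (k := t+4) (by omega) (by omega) (by omega)]
          congr 2; omega
        have h2 : zw (z + Nat.fib (t+4) + Nat.fib (t+4)) = 2 + zw (z + Nat.fib (t+2)) := by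
          rw [zw_strip (k := t+5) (by omega) (by omega) (by omega)]
          congr 2; omega
        omega


theorem crossing_unique {M j q : ℕ} (hq : 1 ≤ q)
    (h1 : j < Nat.fib (M+4)) (h2 : Nat.fib (M+4) < j + 2*q) (h3 : j + 2*q ≤ Nat.fib (M+5))
    (hsq : ∀ i, i < q → zw (j + q + i) = zw (j + i)) :
    j = Nat.fib (M+3) ∧ q = Nat.fib (M+2) := by
  have e2 : Nat.fib (M+2) = Nat.fib M + Nat.fib (M+1) := Nat.fib_add_two
  have e3 : Nat.fib (M+3) = Nat.fib (M+1) + Nat.fib (M+2) := Nat.fib_add_two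
  have e4 : Nat.fib (M+4) = Nat.fib (M+2) + Nat.fib (M+3) := Nat.fib_add_two
  have e5 : Nat.fib (M+5) = Nat.fib (M+3) + Nat.fib (M+4) := Nat.fib_add_two
  have p1 : 1 ≤ Nat.fib (M+1) := Nat.fib_pos.2 (by omega)
  have p2 : 1 ≤ Nat.fib (M+2) := Nat.fib_pos.2 (by omega)
  have mono : ∀ a b : ℕ, a ≤ b → Nat.fib a ≤ Nat.fib b := fun a b h => Nat.fib_mono h
  -- Step A : j + q ≤ fib (M+4)
  have hA : j + q ≤ Nat.fib (M+4) := by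
    by_contra hA
    push_neg at hA
    have hi : Nat.fib (M+4) - j < q := by omega
    have hv := hsq (Nat.fib (M+4) - j) hi
    rw [(by omega : j + (Nat.fib (M+4) - j) = Nat.fib (M+4))] at hv
    rw [(by omega : j + q + (Nat.fib (M+4) - j) = Nat.fib (M+4) + q)] at hv
    rw [zw_fib (by omega)] at hv
    obtain ⟨s, hs3, hse⟩ := zw_eq_two hv
    have hlt : Nat.fib (M+4) < Nat.fib s := by omega
    have hlt2 : Nat.fib s < Nat.fib (M+4+1) := by
      have : Nat.fib (M+4+1) = Nat.fib (M+5) := rfl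
      omega
    exact no_fib_between (by omega) hlt hlt2
  -- Step B : fib (M+4) - q is a Fibonacci number fib r
  obtain ⟨r, hr3, hre⟩ : ∃ r, 3 ≤ r ∧ Nat.fib (M+4) - q = Nat.fib r := by
    have hi : Nat.fib (M+4) - q - j < q := by omega
    have hv := hsq (Nat.fib (M+4) - q - j) hi
    rw [(by omega : j + q + (Nat.fib (M+4) - q - j) = Nat.fib (M+4))] at hv
    rw [(by omega : j + (Nat.fib (M+4) - q - j) = Nat.fib (M+4) - q)] at hv
    rw [zw_fib (by omega)] at hv
    exact zw_eq_two hv.symm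
  have hrq : Nat.fib r + q = Nat.fib (M+4) := by omega
  have hrle : Nat.fib r ≤ Nat.fib (M+3) := by
    apply mono
    by_contra hcon
    push_neg at hcon
    have := mono (M+4) r (by omega)
    omega
  have hqge : Nat.fib (M+2) ≤ q := by omega
  have hjr : j ≤ Nat.fib r := by omega
  have hru : Nat.fib r < j + q := by omega
  -- Step C : uniqueness of Fibonacci numbers in the first copy
  have huniq : ∀ s, 3 ≤ s → j ≤ Nat.fib s → Nat.fib s < j + q → Nat.fib s = Nat.fib r := by
    intro s hs3 hjs hsjq
    have hi : Nat.fib s - j < q := by omega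
    have hv := hsq (Nat.fib s - j) hi
    rw [(by omega : j + (Nat.fib s - j) = Nat.fib s)] at hv
    rw [(by omega : j + q + (Nat.fib s - j) = Nat.fib s + q)] at hv
    rw [zw_fib hs3] at hv
    obtain ⟨s', hs'3, hse'⟩ := zw_eq_two hv
    rcases lt_trichotomy (Nat.fib s) (Nat.fib r) with hlt | heq | hgt
    · exfalso
      -- fib s' = fib s + q,  fib(M+2) ≤ q < fib s' < fib (M+4)
      have hub : Nat.fib s' < Nat.fib (M+4) := by omega
      have hlb : Nat.fib (M+2) < Nat.fib s' := by
        have hfs : 1 ≤ Nat.fib s := Nat.fib_pos.2 (by omega)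
        omega
      have hs'ge : Nat.fib (M+3) ≤ Nat.fib s' := by
        apply mono
        by_contra hcon
        push_neg at hcon
        have := mono s' (M+2) (by omega)
        omega
      have hs'lt : s' < M + 4 := by
        by_contra hcon
        push_neg at hcon
        have := mono (M+4) s' hcon
        omega
      have hs'eq : Nat.fib s' = Nat.fib (M+3) := le_antisymm (mono _ _ (by omega)) hs'ge
      -- then fib r = fib (M+3), so fib s' = fib r, but fib s' ≥ j + q > fib r
      have hfs : 1 ≤ Nat.fib s := Nat.fib_pos.2 (by omega)
      have hrgt : Nat.fib (M+2) < Nat.fib r := by omega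
      have hrge : Nat.fib (M+3) ≤ Nat.fib r := by
        apply mono
        by_contra hcon
        push_neg at hcon
        have := mono r (M+2) (by omega)
        omega
      omega
    · exact heq
    · exfalso
      have hlt : Nat.fib (M+4) < Nat.fib s' := by omega
      have hlt2 : Nat.fib s' < Nat.fib (M+4+1) := by
        have : Nat.fib (M+4+1) = Nat.fib (M+5) := rfl
        omega
      exact no_fib_between (by omega) hlt hlt2
  -- Step D : fib (M+3) < j + q
  have hD : Nat.fib (M+3) < j + q := by
    by_contra hD
    push_neg at hD
    have hi : Nat.fib (M+3) - q - j < q := by omega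
    have hv := hsq (Nat.fib (M+3) - q - j) hi
    rw [(by omega : j + q + (Nat.fib (M+3) - q - j) = Nat.fib (M+3))] at hv
    rw [(by omega : j + (Nat.fib (M+3) - q - j) = Nat.fib (M+3) - q)] at hv
    rw [zw_fib (by omega)] at hv
    obtain ⟨t, ht3, hte⟩ := zw_eq_two hv.symm
    have := huniq t ht3 (by omega) (by omega)
    omega
  -- Step E : fib r = fib (M+3) and q = fib (M+2)
  have hreq : Nat.fib r = Nat.fib (M+3) := by
    rcases eq_or_lt_of_le hrle with h | h
    · exact h
    · exfalso
      have hrlt : r < M + 3 := by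
        by_contra hcon
        push_neg at hcon
        have := mono (M+3) r hcon
        omega
      have h1' : Nat.fib r < Nat.fib (r+1) := Nat.fib_lt_fib_succ (by omega)
      have h2' : Nat.fib (r+1) ≤ Nat.fib (M+3) := mono _ _ (by omega)
      have := huniq (r+1) (by omega) (by omega) (by omega)
      omega
  have hqe : q = Nat.fib (M+2) := by omega
  have hjle : j ≤ Nat.fib (M+3) := by omega
  -- Step F : fib (M+2) < j
  have hF : Nat.fib (M+2) < j := by
    rcases Nat.eq_zero_or_pos M with rfl | hM
    · have b1 : Nat.fib (0+1) = 1 := by decide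
      have b2 : Nat.fib (0+2) = 1 := by decide
      have b3 : Nat.fib (0+3) = 2 := by decide
      have b4 : Nat.fib (0+4) = 3 := by decide
      have b5 : Nat.fib (0+5) = 5 := by decide
      omega
    · by_contra hcon
      push_neg at hcon
      have := huniq (M+2) (by omega) hcon (by omega)
      omega
  -- Step G : j = fib (M+3)
  have hG : j = Nat.fib (M+3) := by
    rcases Nat.lt_or_ge M 2 with hM | hM
    · interval_cases M
      · have b1 : Nat.fib (0+1) = 1 := by decide
        have b2 : Nat.fib (0+2) = 1 := by decide
        have b3 : Nat.fib (0+3) = 2 := by decide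
        have b4 : Nat.fib (0+4) = 3 := by decide
        have b5 : Nat.fib (0+5) = 5 := by decide
        omega
      · have b1 : Nat.fib (1+1) = 1 := by decide
        have b2 : Nat.fib (1+2) = 2 := by decide
        have b3 : Nat.fib (1+3) = 3 := by decide
        have b4 : Nat.fib (1+4) = 5 := by decide
        have b5 : Nat.fib (1+5) = 8 := by decide
        omega
    · by_contra hcon
      have hjlt : j < Nat.fib (M+3) := by omega
      obtain ⟨y, hy1, hy2, hy3⟩ := violation M hM (j - Nat.fib (M+2)) (by
        have : Nat.fib (M+1+1) = Nat.fib (M+2) := rfl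
        omega)
      have hy2' : y < Nat.fib (M+1) := by
        have : Nat.fib (M+1+1) = Nat.fib (M+2) := rfl
        omega
      set x := y + Nat.fib (M+2) with hx
      have hxj : j ≤ x := by omega
      have hxlt : x < Nat.fib (M+3) := by omega
      have hiq : x - j < q := by omega
      have hv := hsq (x - j) hiq
      rw [(by omega : j + (x - j) = x)] at hv
      rw [(by omega : j + q + (x - j) = x + Nat.fib (M+2))] at hv
      have hzx : zw x = 2 + zw y := by
        rw [zw_strip (k := M+2) (by omega) (by omega) (by
          have : Nat.fib (M+2+1) = Nat.fib (M+3) := rfl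
          omega)]
        congr 2
        omega
      have hzx2 : zw (x + Nat.fib (M+2)) = 2 + zw (y + Nat.fib M) := by
        rw [zw_strip (k := M+3) (by omega) (by omega) (by
          have : Nat.fib (M+3+1) = Nat.fib (M+4) := rfl
          omega)]
        congr 2
        omega
      rw [hzx, hzx2] at hv
      omega
  exact ⟨hG, hqe⟩


lemma phi_map2 (a : ℕ) : phi (a + 2) = (phi a).map (· + 2) := by
  unfold phi
  have h : (a + 2) % 2 = a % 2 := Nat.add_mod_right a 2
  rcases Nat.mod_two_eq_zero_or_one a with h0 | h0 <;> simp [h, h0]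

lemma flatMap_map2 (l : List ℕ) :
    (l.map (· + 2)).flatMap phi = (l.flatMap phi).map (· + 2) := by
  induction l with
  | nil => simp
  | cons a l ih => simp [List.flatMap_cons, ih, phi_map2]

lemma W_succ (n : ℕ) : W (n+1) = (W n).flatMap phi := by
  unfold W
  rw [Function.iterate_succ_apply']

lemma W_rec : ∀ n, W (n+2) = W (n+1) ++ (W n).map (· + 2) := by
  intro n
  induction n with
  | zero => decide
  | succ n ih =>
    rw [W_succ (n+2), ih, List.flatMap_append, flatMap_map2, ← W_succ, ← W_succ, ih]

lemma W_eq : ∀ n, W n = (List.range (Nat.fib (n+2))).map zw := by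
  intro n
  induction n using Nat.strong_induction_on with
  | _ n ih =>
    match n with
    | 0 => simp [W, (by decide : Nat.fib 2 = 1), List.range_succ, zw_zero]
    | 1 =>
      have : Nat.fib 3 = 2 := by decide
      simp [W, phi, this, List.range_succ, zw_zero, zw_one]
    | (n+2) =>
      have e : Nat.fib (n+4) = Nat.fib (n+3) + Nat.fib (n+2) := by
        have h := Nat.fib_add_two (n := n+2)
        have h2 : Nat.fib (n+2+1) = Nat.fib (n+3) := rfl
        have h3 : Nat.fib (n+2+2) = Nat.fib (n+4) := rfl
        omega
      rw [W_rec n, ih (n+1) (by omega), ih n (by omega), e, List.range_add]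
      rw [List.map_append, List.map_map, List.map_map]
      congr 1
      apply List.map_congr_left
      intro x hx
      rw [List.mem_range] at hx
      have : zw (Nat.fib (n+3) + x) = 2 + zw x := by
        rw [zw_strip (k := n+3) (by omega) (by omega) (by
          have h1 : Nat.fib (n+3+1) = Nat.fib (n+4) := rfl
          omega)]
        congr 2
        omega
      simp [this]
      omega


/-- the square-occurrence set, in arithmetic form -/
noncomputable def Sq (N : ℕ) : Finset (ℕ × ℕ) :=
  (Finset.range (N+1) ×ˢ Finset.range (N+1)).filter
    (fun p => 1 ≤ p.2 ∧ p.1 + 2*p.2 ≤ N ∧ ∀ i < p.2, zw (p.1 + p.2 + i) = zw (p.1 + i))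

lemma mem_Sq {N : ℕ} {p : ℕ × ℕ} :
    p ∈ Sq N ↔ 1 ≤ p.2 ∧ p.1 + 2*p.2 ≤ N ∧ ∀ i < p.2, zw (p.1 + p.2 + i) = zw (p.1 + i) := by
  unfold Sq
  rw [Finset.mem_filter]
  constructor
  · tauto
  · intro h
    refine ⟨?_, h⟩
    rw [Finset.mem_product, Finset.mem_range, Finset.mem_range]
    omega

lemma take_drop_map (f : ℕ → ℕ) {N j q : ℕ} (h : j + q ≤ N) :
    (((List.range N).map f).drop j).take q = (List.range q).map (fun i => f (j+i)) := by
  apply List.ext_getElem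
  · simp
    omega
  · intro i h1 h2
    simp only [List.getElem_take, List.getElem_drop, List.getElem_map, List.getElem_range]

lemma sqOcc_eq (n : ℕ) : sqOcc (W n) = (Sq (Nat.fib (n+2))).card := by
  unfold sqOcc Sq
  rw [W_eq n]
  have hlen : (((List.range (Nat.fib (n+2)))).map zw).length = Nat.fib (n+2) := by simp
  rw [hlen]
  congr 1
  apply Finset.filter_congr
  intro p hp
  rw [Finset.mem_product, Finset.mem_range, Finset.mem_range] at hp
  obtain ⟨j, q⟩ := p
  simp only
  apply and_congr_right
  intro hq
  apply and_congr_right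
  intro hle
  set L := (List.range (Nat.fib (n+2))).map zw with hL
  have h2q : 2 * q = q + q := by omega
  rw [h2q, List.take_add, List.drop_drop, List.append_right_inj]
  rw [take_drop_map zw (by omega : j + q ≤ Nat.fib (n+2)),
      take_drop_map zw (by omega : (j + q) + q ≤ Nat.fib (n+2))]
  rw [List.map_inj_left]
  simp only [List.mem_range]


lemma Sq_card_step (M : ℕ) :
    (Sq (Nat.fib (M+5))).card = (Sq (Nat.fib (M+4))).card + (Sq (Nat.fib (M+3))).card + 1 := by
  have e3 : Nat.fib (M+3) = Nat.fib (M+1) + Nat.fib (M+2) := Nat.fib_add_two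
  have e4 : Nat.fib (M+4) = Nat.fib (M+2) + Nat.fib (M+3) := Nat.fib_add_two
  have e5 : Nat.fib (M+5) = Nat.fib (M+3) + Nat.fib (M+4) := Nat.fib_add_two
  have p1 : 1 ≤ Nat.fib (M+1) := Nat.fib_pos.2 (by omega)
  have p2 : 1 ≤ Nat.fib (M+2) := Nat.fib_pos.2 (by omega)
  have p3 : 1 ≤ Nat.fib (M+3) := Nat.fib_pos.2 (by omega)
  have hshift : ∀ x, x < Nat.fib (M+3) → zw (Nat.fib (M+4) + x) = 2 + zw x := by
    intro x hx
    rw [zw_strip (k := M+4) (by omega) (by omega) (by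
      have : Nat.fib (M+4+1) = Nat.fib (M+5) := rfl
      omega)]
    congr 2
    omega
  classical
  -- split off the part that fits inside `fib (M+4)`
  have split1 := Finset.card_filter_add_card_filter_not
    (s := Sq (Nat.fib (M+5))) (p := fun p => p.1 + 2*p.2 ≤ Nat.fib (M+4))
  -- the first part is Sq (fib (M+4))
  have hA : (Sq (Nat.fib (M+5))).filter (fun p => p.1 + 2*p.2 ≤ Nat.fib (M+4))
      = Sq (Nat.fib (M+4)) := by
    ext p
    rw [Finset.mem_filter, mem_Sq, mem_Sq]
    constructor
    · rintro ⟨⟨h1, h2, h3⟩, h4⟩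
      exact ⟨h1, h4, h3⟩
    · rintro ⟨h1, h2, h3⟩
      exact ⟨⟨h1, by omega, h3⟩, h2⟩
  -- split the rest by whether j ≥ fib (M+4)
  have split2 := Finset.card_filter_add_card_filter_not
    (s := (Sq (Nat.fib (M+5))).filter (fun p => ¬ (p.1 + 2*p.2 ≤ Nat.fib (M+4))))
    (p := fun p => Nat.fib (M+4) ≤ p.1)
  -- the `j ≥ fib (M+4)` part is in bijection with Sq (fib (M+3))
  have hB : (((Sq (Nat.fib (M+5))).filter (fun p => ¬ (p.1 + 2*p.2 ≤ Nat.fib (M+4)))).filter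
      (fun p => Nat.fib (M+4) ≤ p.1)).card = (Sq (Nat.fib (M+3))).card := by
    have hBset : ((Sq (Nat.fib (M+5))).filter (fun p => ¬ (p.1 + 2*p.2 ≤ Nat.fib (M+4)))).filter
        (fun p => Nat.fib (M+4) ≤ p.1)
        = (Sq (Nat.fib (M+3))).image (fun p => (p.1 + Nat.fib (M+4), p.2)) := by
      ext p
      rw [Finset.mem_filter, Finset.mem_filter, mem_Sq, Finset.mem_image]
      constructor
      · rintro ⟨⟨⟨h1, h2, h3⟩, h4⟩, h5⟩
        refine ⟨(p.1 - Nat.fib (M+4), p.2), ?_, ?_⟩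
        · rw [mem_Sq]
          refine ⟨h1, ?_, ?_⟩
          · show p.1 - Nat.fib (M+4) + 2 * p.2 ≤ Nat.fib (M+3)
            omega
          · intro i hi
            have hi' : i < p.2 := hi
            have hv := h3 i hi'
            show zw (p.1 - Nat.fib (M+4) + p.2 + i) = zw (p.1 - Nat.fib (M+4) + i)
            have u1 : p.1 + p.2 + i = Nat.fib (M+4) + (p.1 - Nat.fib (M+4) + p.2 + i) := by omega
            have u2 : p.1 + i = Nat.fib (M+4) + (p.1 - Nat.fib (M+4) + i) := by omega
            rw [u1, u2, hshift _ (by omega), hshift _ (by omega)] at hv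
            omega
        · show (p.1 - Nat.fib (M+4) + Nat.fib (M+4), p.2) = p
          have : p.1 - Nat.fib (M+4) + Nat.fib (M+4) = p.1 := by omega
          rw [this]
      · rintro ⟨a, ha, rfl⟩
        rw [mem_Sq] at ha
        obtain ⟨h1, h2, h3⟩ := ha
        refine ⟨⟨⟨h1, ?_, ?_⟩, ?_⟩, ?_⟩
        · show a.1 + Nat.fib (M+4) + 2 * a.2 ≤ Nat.fib (M+5)
          omega
        · intro i hi
          have hi' : i < a.2 := hi
          have hv := h3 i hi'
          show zw (a.1 + Nat.fib (M+4) + a.2 + i) = zw (a.1 + Nat.fib (M+4) + i)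
          have u1 : a.1 + Nat.fib (M+4) + a.2 + i = Nat.fib (M+4) + (a.1 + a.2 + i) := by omega
          have u2 : a.1 + Nat.fib (M+4) + i = Nat.fib (M+4) + (a.1 + i) := by omega
          rw [u1, u2, hshift _ (by omega), hshift _ (by omega)]
          omega
        · show ¬ (a.1 + Nat.fib (M+4) + 2 * a.2 ≤ Nat.fib (M+4))
          omega
        · show Nat.fib (M+4) ≤ a.1 + Nat.fib (M+4)
          omega
    rw [hBset]
    apply Finset.card_image_of_injective
    intro a b hab
    rw [Prod.ext_iff] at hab ⊢
    obtain ⟨hab1, hab2⟩ := hab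
    simp only at hab1 hab2 ⊢
    omega
  -- the crossing part is the single square (fib (M+3), fib (M+2))
  have hC : ((Sq (Nat.fib (M+5))).filter (fun p => ¬ (p.1 + 2*p.2 ≤ Nat.fib (M+4)))).filter
      (fun p => ¬ (Nat.fib (M+4) ≤ p.1)) = {(Nat.fib (M+3), Nat.fib (M+2))} := by
    ext p
    rw [Finset.mem_filter, Finset.mem_filter, mem_Sq, Finset.mem_singleton]
    constructor
    · rintro ⟨⟨⟨h1, h2, h3⟩, h4⟩, h5⟩
      have := crossing_unique (M := M) h1 (by omega) (by omega) h2 h3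
      ext
      · simp [this.1]
      · simp [this.2]
    · rintro rfl
      refine ⟨⟨⟨?_, ?_, ?_⟩, ?_⟩, ?_⟩
      · show 1 ≤ Nat.fib (M+2); omega
      · show Nat.fib (M+3) + 2*Nat.fib (M+2) ≤ Nat.fib (M+5); omega
      · intro i hi
        have hi' : i < Nat.fib (M+2) := hi
        show zw (Nat.fib (M+3) + Nat.fib (M+2) + i) = zw (Nat.fib (M+3) + i)
        have u1 : Nat.fib (M+3) + Nat.fib (M+2) + i = Nat.fib (M+4) + i := by omega
        rw [u1, hshift i (by omega)]
        rw [zw_strip (k := M+3) (x := Nat.fib (M+3) + i) (by omega) (by omega) (by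
          have : Nat.fib (M+3+1) = Nat.fib (M+4) := rfl
          omega)]
        congr 2
        omega
      · show ¬ (Nat.fib (M+3) + 2*Nat.fib (M+2) ≤ Nat.fib (M+4)); omega
      · show ¬ (Nat.fib (M+4) ≤ Nat.fib (M+3)); omega
  rw [hC] at split2
  rw [hA] at split1
  rw [hB] at split2
  simp only [Finset.card_singleton] at split2
  omega


lemma Sq_two : Sq 2 = ∅ := by
  rw [Finset.eq_empty_iff_forall_notMem]
  intro p hp
  rw [mem_Sq] at hp
  obtain ⟨h1, h2, h3⟩ := hp
  have hq : p.2 = 1 := by omega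
  have hj : p.1 = 0 := by omega
  have h := h3 0 (by omega)
  rw [hq, hj] at h
  norm_num [zw_one, zw_zero] at h

lemma Sq_three : Sq 3 = ∅ := by
  rw [Finset.eq_empty_iff_forall_notMem]
  intro p hp
  rw [mem_Sq] at hp
  obtain ⟨h1, h2, h3⟩ := hp
  have hz2 : zw 2 = 2 := by
    have := zw_fib (k := 3) (by omega)
    simpa [(by decide : Nat.fib 3 = 2)] using this
  have hq : p.2 = 1 := by omega
  have := h3 0 (by omega)
  rw [hq] at this
  have hj : p.1 = 0 ∨ p.1 = 1 := by omega
  rcases hj with hj | hj <;> rw [hj] at this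
  · norm_num [zw_one, zw_zero] at this
  · norm_num [hz2, zw_one] at this

lemma Sq_card : ∀ n, 1 ≤ n → (Sq (Nat.fib (n+2))).card = Nat.fib n - 1 := by
  intro n
  induction n using Nat.strong_induction_on with
  | _ n ih =>
    intro hn
    match n, hn with
    | 1, _ => rw [(by decide : Nat.fib 3 = 2), Sq_two]; decide
    | 2, _ => rw [(by decide : Nat.fib 4 = 3), Sq_three]; decide
    | (M+3), _ =>
      have h1 := ih (M+2) (by omega) (by omega)
      have h2 := ih (M+1) (by omega) (by omega)
      have e : Nat.fib (M+3) = Nat.fib (M+1) + Nat.fib (M+2) := Nat.fib_add_two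
      have p1 : 1 ≤ Nat.fib (M+1) := Nat.fib_pos.2 (by omega)
      have p2 : 1 ≤ Nat.fib (M+2) := Nat.fib_pos.2 (by omega)
      have step := Sq_card_step M
      have h1' : (Sq (Nat.fib (M+4))).card = Nat.fib (M+2) - 1 := h1
      have h2' : (Sq (Nat.fib (M+3))).card = Nat.fib (M+1) - 1 := h2
      show (Sq (Nat.fib (M+5))).card = Nat.fib (M+3) - 1
      omega


/-- For all `i ≥ 1`, the total number of occurrences of squares in `W i` is `f i - 1`. -/
theorem zww_total_squares : ∀ i : ℕ, 1 ≤ i → sqOcc (W i) = Nat.fib i - 1 := by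
  intro i hi
  rw [sqOcc_eq i]
  exact Sq_card i hi
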